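/- Let F = Σ_{i=0}^d f_i X^i and G = Σ_{i=0}^d g_i X^i be two polynomials over ℂ of equal valuation, where deg F is exactly d and G is formally regarded as having degree d. Let G/F = v + Σ_{i≥1} v_i X^i be the power-series expansion of G/F around 0, and let G/F = −u − Σ_{i≥1} u_i X^{−i} be its expansion around infinity. For k ≥ 1 let T_k(F,G) = (t_{i,j})_{1≤i,j≤k} be the Toeplitz matrix with t_{i,j} = v_{j−i} if i < j, t_{i,j} = u_{i−j} if i > j, and t_{i,j} = u+v if i = j. Then, if (S_j)_{−1 ≤ j ≤ d} is the sequence of symmetric subresultants computed with S_{−1} = F and S_0 = G, one has for every k = 1, …, d: S_k(0) = (−1)^k · f_0^k · f_d^k · det(T_k(F,G)). -/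
import Mathlib


open Polynomial

/-- The `2j × 2j` square submatrix `Sylv_{j,ℓ}(A,B)` of the Sylvester-type matrix of `A` and `B`
(of formal degree `d`): rows are the coefficient vectors of `A, XA, …, X^{j-1}A, B, …, X^{j-1}B`,
keeping the columns of degrees `0, …, j-2`, the column of degree `j-1+ℓ`, and the columns of
degrees `d, …, d+j-1`. -/
noncomputable def sylvMat {R : Type*} [CommRing R] (A B : R[X]) (d j ℓ : ℕ) :
    Matrix (Fin (2 * j)) (Fin (2 * j)) R := fun r c =>
  (if (r : ℕ) < j then X ^ (r : ℕ) * A else X ^ ((r : ℕ) - j) * B).coeff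
    (if (c : ℕ) < j - 1 then (c : ℕ)
     else if (c : ℕ) = j - 1 then j - 1 + ℓ
     else d + ((c : ℕ) - j))

/-- The sequence of symmetric subresultants of `A` and `B` (of formal degree `d`):
`S_0 = B` and `S_j = ∑_{ℓ=0}^{d-j} det (Sylv_{j,ℓ}(A,B)) · X^ℓ` for `1 ≤ j`. -/
noncomputable def symSubres {R : Type*} [CommRing R] (A B : R[X]) (d j : ℕ) : R[X] :=
  if j = 0 then B
  else ∑ ℓ ∈ Finset.range (d - j + 1), C (sylvMat A B d j ℓ).det * X ^ ℓ

private lemma sum_shift_aux (k r : ℕ) (hr : r ≤ k) (g f : ℕ → ℂ) :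
    ∑ s ∈ Finset.range k, (if r ≤ s then g (s - r) else 0) * f s
      = ∑ i ∈ Finset.range (k - r), g i * f (r + i) := by
  conv_lhs => rw [Finset.range_eq_Ico]
  rw [← Finset.sum_Ico_consecutive (fun s => (if r ≤ s then g (s - r) else 0) * f s)
      (Nat.zero_le r) hr]
  have h0 : ∑ s ∈ Finset.Ico 0 r, (if r ≤ s then g (s - r) else 0) * f s = 0 :=
    Finset.sum_eq_zero fun s hs => by
      rw [Finset.mem_Ico] at hs
      rw [if_neg (by omega), zero_mul]
  rw [h0, zero_add, Finset.sum_Ico_eq_sum_range]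
  exact Finset.sum_congr rfl fun i _ => by
    rw [if_pos (Nat.le_add_right r i), Nat.add_sub_cancel_left]

/-- Link between symmetric subresultants and Toeplitz matrices: if `G/F = v + ∑ v_i X^i`
around `0` and `G/F = -u - ∑ u_i X^{-i}` around infinity (encoded here by `w 0 = v`,
`w i = v_i`, `u 0 = u`, `u i = u_i` and the corresponding coefficient identities), and
`T_k(F,G)` is the associated Toeplitz matrix, then
`S_k(0) = (-1)^k · f_0^k · f_d^k · det(T_k(F,G))` for `k = 1, …, d`. -/
theorem symSubres_toeplitz_link (F G : Polynomial ℂ) (d : ℕ)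
    (hFdeg : F.degree = (d : ℕ)) (hGdeg : G.natDegree ≤ d) (hG : G ≠ 0)
    (hval : F.natTrailingDegree = G.natTrailingDegree)
    (w u : ℕ → ℂ)
    (hw : ∀ n, G.coeff n = ∑ i ∈ Finset.range (n + 1), w i * F.coeff (n - i))
    (hu : ∀ n, n ≤ d →
      G.coeff (d - n) = -∑ i ∈ Finset.range (n + 1), u i * F.coeff (d - n + i)) :
    ∀ k, 1 ≤ k → k ≤ d →
      (symSubres F G d k).coeff 0 =
        (-1) ^ k * F.coeff 0 ^ k * F.coeff d ^ k *
          (Matrix.of fun i j : Fin k =>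
            if (i : ℕ) < (j : ℕ) then w ((j : ℕ) - (i : ℕ))
            else if (j : ℕ) < (i : ℕ) then u ((i : ℕ) - (j : ℕ))
            else u 0 + w 0).det := by
  intro k hk1 hkd
  have hk0 : k ≠ 0 := by omega
  have hdF : F.natDegree = d := natDegree_eq_of_degree_eq_some hFdeg
  have hFhigh : ∀ m : ℕ, d < m → F.coeff m = 0 := fun m hm =>
    coeff_eq_zero_of_natDegree_lt (by omega)
  have hGhigh : ∀ m : ℕ, d < m → G.coeff m = 0 := fun m hm =>
    coeff_eq_zero_of_natDegree_lt (by omega)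
  set T : Matrix (Fin k) (Fin k) ℂ :=
    Matrix.of fun i j : Fin k =>
      if (i : ℕ) < (j : ℕ) then w ((j : ℕ) - (i : ℕ))
      else if (j : ℕ) < (i : ℕ) then u ((i : ℕ) - (j : ℕ))
      else u 0 + w 0 with hT
  set L : Matrix (Fin k) (Fin k) ℂ := fun r c => (F * X ^ (r : ℕ)).coeff (c : ℕ) with hLdef
  set Rm : Matrix (Fin k) (Fin k) ℂ := fun s a => (F * X ^ (s : ℕ)).coeff (d + (a : ℕ))
    with hRdef
  set Wm : Matrix (Fin k) (Fin k) ℂ :=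
    fun r s => if (r : ℕ) ≤ (s : ℕ) then w ((s : ℕ) - (r : ℕ)) else 0 with hWdef
  -- Step 1 : constant coefficient picks out ℓ = 0
  have step1 : (symSubres F G d k).coeff 0 = (sylvMat F G d k 0).det := by
    rw [symSubres, if_neg hk0, finset_sum_coeff]
    simp only [coeff_C_mul, coeff_X_pow]
    rw [Finset.sum_eq_single 0]
    · simp
    · intro b _ hb
      simp [Ne.symm hb]
    · intro h
      simp only [Finset.mem_range] at h
      omega
  -- the reindexing equivalence
  set e : Fin k ⊕ Fin k ≃ Fin (2 * k) := finSumFinEquiv.trans (finCongr (two_mul k).symm)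
    with he
  have hinl : ∀ x : Fin k, ((e (Sum.inl x) : ℕ)) = (x : ℕ) := fun x => by
    simp [he, finSumFinEquiv, finCongr]
  have hinr : ∀ x : Fin k, ((e (Sum.inr x) : ℕ)) = k + (x : ℕ) := fun x => by
    simp [he, finSumFinEquiv, finCongr, Nat.add_comm]
  -- entries of the reindexed Sylvester matrix
  have hS11 : ∀ r c : Fin k,
      sylvMat F G d k 0 (e (Sum.inl r)) (e (Sum.inl c)) = L r c := by
    intro r c
    rw [sylvMat]
    rw [hinl r, hinl c]
    have hcol : (if (c : ℕ) < k - 1 then (c : ℕ)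
        else if (c : ℕ) = k - 1 then k - 1 + 0 else d + ((c : ℕ) - k)) = (c : ℕ) := by
      have := c.isLt
      split_ifs <;> omega
    rw [hcol, if_pos r.isLt, hLdef, mul_comm]
  have hS12 : ∀ r c : Fin k,
      sylvMat F G d k 0 (e (Sum.inl r)) (e (Sum.inr c)) = Rm r c := by
    intro r c
    rw [sylvMat]
    rw [hinl r, hinr c]
    have hcol : (if k + (c : ℕ) < k - 1 then k + (c : ℕ)
        else if k + (c : ℕ) = k - 1 then k - 1 + 0 else d + (k + (c : ℕ) - k))
        = d + (c : ℕ) := by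
      split_ifs <;> omega
    rw [hcol, if_pos r.isLt, hRdef, mul_comm]
  have hS21 : ∀ r c : Fin k,
      sylvMat F G d k 0 (e (Sum.inr r)) (e (Sum.inl c))
        = (G * X ^ (r : ℕ)).coeff (c : ℕ) := by
    intro r c
    rw [sylvMat]
    rw [hinr r, hinl c]
    have hcol : (if (c : ℕ) < k - 1 then (c : ℕ)
        else if (c : ℕ) = k - 1 then k - 1 + 0 else d + ((c : ℕ) - k)) = (c : ℕ) := by
      have := c.isLt
      split_ifs <;> omega
    rw [hcol, if_neg (by omega), show k + (r : ℕ) - k = (r : ℕ) by omega, mul_comm]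
  have hS22 : ∀ r c : Fin k,
      sylvMat F G d k 0 (e (Sum.inr r)) (e (Sum.inr c))
        = (G * X ^ (r : ℕ)).coeff (d + (c : ℕ)) := by
    intro r c
    rw [sylvMat]
    rw [hinr r, hinr c]
    have hcol : (if k + (c : ℕ) < k - 1 then k + (c : ℕ)
        else if k + (c : ℕ) = k - 1 then k - 1 + 0 else d + (k + (c : ℕ) - k))
        = d + (c : ℕ) := by
      split_ifs <;> omega
    rw [hcol, if_neg (by omega), show k + (r : ℕ) - k = (r : ℕ) by omega, mul_comm]
  -- key identity for the bottom-left block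
  have hbl : ∀ r c : Fin k, (G * X ^ (r : ℕ)).coeff (c : ℕ) = (Wm * L) r c := by
    intro r c
    rw [Matrix.mul_apply]
    have hrw : (∑ s : Fin k, Wm r s * L s c)
        = ∑ s ∈ Finset.range k,
            (if (r : ℕ) ≤ s then w (s - (r : ℕ)) else 0) * (F * X ^ s).coeff (c : ℕ) :=
      Fin.sum_univ_eq_sum_range
        (fun s => (if (r : ℕ) ≤ s then w (s - (r : ℕ)) else 0) * (F * X ^ s).coeff (c : ℕ)) k
    rw [hrw, sum_shift_aux k (r : ℕ) (le_of_lt r.isLt)]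
    rw [coeff_mul_X_pow']
    by_cases hrc : (r : ℕ) ≤ (c : ℕ)
    · rw [if_pos hrc, hw ((c : ℕ) - (r : ℕ))]
      have hsub : Finset.range ((c : ℕ) - (r : ℕ) + 1) ⊆ Finset.range (k - (r : ℕ)) := by
        apply Finset.range_subset_range.2
        have := c.isLt
        omega
      rw [← Finset.sum_subset hsub (fun x hx hnx => by
        simp only [Finset.mem_range] at hx hnx
        rw [coeff_mul_X_pow', if_neg (by omega), mul_zero])]
      refine Finset.sum_congr rfl fun i hi => ?_
      simp only [Finset.mem_range] at hi
      rw [coeff_mul_X_pow', if_pos (by omega),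
        (by omega : (c : ℕ) - ((r : ℕ) + i) = (c : ℕ) - (r : ℕ) - i)]
    · rw [if_neg hrc]
      refine (Finset.sum_eq_zero fun i _ => ?_).symm
      rw [coeff_mul_X_pow', if_neg (by omega), mul_zero]
  -- key identity from the expansion at infinity
  have hkey : ∀ r c : Fin k, (G * X ^ (r : ℕ)).coeff (d + (c : ℕ))
      = -∑ s ∈ Finset.range k,
          (if s ≤ (r : ℕ) then u ((r : ℕ) - s) else 0) * (F * X ^ s).coeff (d + (c : ℕ)) := by
    intro r c
    have hrk : (r : ℕ) < k := r.isLt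
    have hck : (c : ℕ) < k := c.isLt
    rw [coeff_mul_X_pow', if_pos (by omega)]
    have hsub : Finset.range ((r : ℕ) + 1) ⊆ Finset.range k := Finset.range_subset_range.2 (by omega)
    rw [← Finset.sum_subset hsub (fun x hx hnx => by
      simp only [Finset.mem_range] at hx hnx
      rw [if_neg (by omega), zero_mul])]
    have hrefl := Finset.sum_range_reflect
      (fun s => (if s ≤ (r : ℕ) then u ((r : ℕ) - s) else 0) * (F * X ^ s).coeff (d + (c : ℕ)))
      ((r : ℕ) + 1)
    rw [← hrefl]
    have hterm : ∀ j ∈ Finset.range ((r : ℕ) + 1),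
        (if (r : ℕ) + 1 - 1 - j ≤ (r : ℕ) then u ((r : ℕ) - ((r : ℕ) + 1 - 1 - j)) else 0) *
            (F * X ^ ((r : ℕ) + 1 - 1 - j)).coeff (d + (c : ℕ))
          = u j * F.coeff (d + (c : ℕ) - ((r : ℕ) - j)) := by
      intro j hj
      simp only [Finset.mem_range] at hj
      rw [if_pos (by omega), coeff_mul_X_pow', if_pos (by omega),
        (by omega : (r : ℕ) + 1 - 1 - j = (r : ℕ) - j),
        (by omega : (r : ℕ) - ((r : ℕ) - j) = j)]
    rw [Finset.sum_congr rfl hterm]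
    by_cases hcr : (c : ℕ) ≤ (r : ℕ)
    · have hn : (r : ℕ) - (c : ℕ) ≤ d := by omega
      have := hu ((r : ℕ) - (c : ℕ)) hn
      have hidx : d - ((r : ℕ) - (c : ℕ)) = d + (c : ℕ) - (r : ℕ) := by omega
      rw [hidx] at this
      rw [this]
      congr 1
      have hsub2 : Finset.range ((r : ℕ) - (c : ℕ) + 1) ⊆ Finset.range ((r : ℕ) + 1) :=
        Finset.range_subset_range.2 (by omega)
      rw [← Finset.sum_subset hsub2 (fun x hx hnx => by
        simp only [Finset.mem_range] at hx hnx
        rw [hFhigh (d + (c : ℕ) - ((r : ℕ) - x)) (by omega), mul_zero])]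
      refine Finset.sum_congr rfl fun i hi => ?_
      simp only [Finset.mem_range] at hi
      rw [(by omega : d + (c : ℕ) - ((r : ℕ) - i) = d + (c : ℕ) - (r : ℕ) + i)]
    · rw [hGhigh (d + (c : ℕ) - (r : ℕ)) (by omega)]
      refine (neg_eq_zero.2 (Finset.sum_eq_zero fun i hi => ?_)).symm
      simp only [Finset.mem_range] at hi
      rw [hFhigh (d + (c : ℕ) - ((r : ℕ) - i)) (by omega), mul_zero]
  -- bottom-right block identity
  have hbr : ∀ r c : Fin k,
      (G * X ^ (r : ℕ)).coeff (d + (c : ℕ)) = (Wm * Rm) r c + (-(T * Rm)) r c := by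
    intro r c
    have hTsplit : ∀ s : Fin k,
        T r s = Wm r s + (if (s : ℕ) ≤ (r : ℕ) then u ((r : ℕ) - (s : ℕ)) else 0) := by
      intro s
      simp only [hT, hWdef, Matrix.of_apply]
      by_cases h1 : (r : ℕ) < (s : ℕ)
      · rw [if_pos h1, if_pos h1.le, if_neg (by omega), add_zero]
      · by_cases h2 : (s : ℕ) < (r : ℕ)
        · rw [if_neg h1, if_pos h2, if_neg (by omega), if_pos h2.le, zero_add]
        · rw [if_neg h1, if_neg h2, if_pos (by omega), if_pos (by omega),
            (by omega : (s : ℕ) - (r : ℕ) = 0), (by omega : (r : ℕ) - (s : ℕ) = 0)]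
          ring
    have hTR : (T * Rm) r c = (Wm * Rm) r c
        + ∑ s : Fin k, (if (s : ℕ) ≤ (r : ℕ) then u ((r : ℕ) - (s : ℕ)) else 0) * Rm s c := by
      rw [Matrix.mul_apply, Matrix.mul_apply, ← Finset.sum_add_distrib]
      refine Finset.sum_congr rfl fun s _ => ?_
      rw [hTsplit s, add_mul]
    have hU : ∑ s : Fin k, (if (s : ℕ) ≤ (r : ℕ) then u ((r : ℕ) - (s : ℕ)) else 0) * Rm s c
        = ∑ s ∈ Finset.range k,
            (if s ≤ (r : ℕ) then u ((r : ℕ) - s) else 0) * (F * X ^ s).coeff (d + (c : ℕ)) :=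
      Fin.sum_univ_eq_sum_range
        (fun s => (if s ≤ (r : ℕ) then u ((r : ℕ) - s) else 0) *
          (F * X ^ s).coeff (d + (c : ℕ))) k
    have := hkey r c
    rw [Matrix.neg_apply, hTR, hU]
    rw [this]
    ring
  -- factorization of the Sylvester matrix
  have hfact : (sylvMat F G d k 0).submatrix e e
      = Matrix.fromBlocks 1 0 Wm 1 * Matrix.fromBlocks L Rm 0 (-(T * Rm)) := by
    rw [Matrix.fromBlocks_multiply]
    simp only [Matrix.one_mul, Matrix.mul_one, Matrix.zero_mul, Matrix.mul_zero,
      add_zero, zero_add]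
    ext i j
    rcases i with r | r <;> rcases j with c | c
    · rw [Matrix.submatrix_apply, Matrix.fromBlocks_apply₁₁, hS11]
    · rw [Matrix.submatrix_apply, Matrix.fromBlocks_apply₁₂, hS12]
    · rw [Matrix.submatrix_apply, Matrix.fromBlocks_apply₂₁, hS21, hbl]
    · rw [Matrix.submatrix_apply, Matrix.fromBlocks_apply₂₂, hS22, hbr r c,
        Matrix.add_apply]
  -- determinant computations
  have hdetL : L.det = F.coeff 0 ^ k := by
    have htri : L.BlockTriangular id := by
      intro i j hij
      simp only [id] at hij
      simp only [hLdef]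
      rw [coeff_mul_X_pow', if_neg (by exact_mod_cast not_le.2 hij)]
    rw [Matrix.det_of_upperTriangular htri]
    have hdiag : ∀ i : Fin k, L i i = F.coeff 0 := by
      intro i
      simp only [hLdef]
      rw [coeff_mul_X_pow', if_pos le_rfl, Nat.sub_self]
    rw [Finset.prod_congr rfl fun i _ => hdiag i]
    simp
  have hdetR : Rm.det = F.coeff d ^ k := by
    have htri : Rm.BlockTriangular OrderDual.toDual := by
      intro i j hij
      have hij' : (i : ℕ) < (j : ℕ) := hij
      simp only [hRdef]
      rw [coeff_mul_X_pow', if_pos (by omega)]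
      exact hFhigh _ (by omega)
    rw [Matrix.det_of_lowerTriangular Rm htri]
    have hdiag : ∀ i : Fin k, Rm i i = F.coeff d := by
      intro i
      simp only [hRdef]
      rw [coeff_mul_X_pow', if_pos (by omega), (by omega : d + (i : ℕ) - (i : ℕ) = d)]
    rw [Finset.prod_congr rfl fun i _ => hdiag i]
    simp
  -- put everything together
  rw [step1, ← Matrix.det_submatrix_equiv_self e, hfact, Matrix.det_mul,
    Matrix.det_fromBlocks_zero₁₂, Matrix.det_one, Matrix.det_fromBlocks_zero₂₁,
    Matrix.det_neg, Matrix.det_mul, hdetL, hdetR]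
  simp only [Fintype.card_fin]
  ring
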